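/- Let K be a positive integer and let α be a real skew-symmetric K×K matrix. If u: ℝ → ℝ^K is a twice continuously differentiable 2π-periodic map with u''(θ) + 2α·u'(θ) + α²·u(θ) = 0 for all θ, then u'(θ) + α·u(θ) = 0 for all θ. -/

import Mathlib

open Real MeasureTheory
open scoped Matrix RealInnerProductSpace

/-- The action of a `K × K` real matrix on `ℝ^K` (with the Euclidean norm). -/
noncomputable def matAct {K : ℕ} (α : Matrix (Fin K) (Fin K) ℝ)
    (x : EuclideanSpace ℝ (Fin K)) : EuclideanSpace ℝ (Fin K) :=
  Matrix.toEuclideanLin α x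

/-- `∂_α² u = 0` implies `∂_α u = 0` for periodic maps (Section 4.2). -/
theorem twisted_second_deriv_zero (K : ℕ) (hK : 0 < K)
    (α : Matrix (Fin K) (Fin K) ℝ) (hα : αᵀ = -α)
    (u : ℝ → EuclideanSpace ℝ (Fin K))
    (hu : ContDiff ℝ 2 u) (hper : Function.Periodic u (2 * Real.pi))
    (h : ∀ θ : ℝ, deriv (deriv u) θ + (2 : ℝ) • matAct α (deriv u θ)
      + matAct α (matAct α (u θ)) = 0) :
    ∀ θ : ℝ, deriv u θ + matAct α (u θ) = 0 := by
  -- skew-symmetry of the action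
  have hadj : Matrix.toEuclideanLin α.conjTranspose
      = LinearMap.adjoint (Matrix.toEuclideanLin α) :=
    Matrix.toEuclideanLin_conjTranspose_eq_adjoint α
  have hct : α.conjTranspose = -α := by
    rw [Matrix.conjTranspose_eq_transpose_of_trivial, hα]
  have skew : ∀ x y : EuclideanSpace ℝ (Fin K),
      ⟪matAct α x, y⟫ = -⟪x, matAct α y⟫ := by
    intro x y
    have key := LinearMap.adjoint_inner_left (Matrix.toEuclideanLin α) y x
    rw [← hadj, hct, map_neg, LinearMap.neg_apply, inner_neg_left] at key
    -- key : -⟪L y, x⟫ = ⟪y, L x⟫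
    have key' : -⟪matAct α x, y⟫ = ⟪x, matAct α y⟫ := key
    linarith [key']
  have skew_self : ∀ x : EuclideanSpace ℝ (Fin K), ⟪matAct α x, x⟫ = 0 := by
    intro x
    have := skew x x
    linarith [real_inner_comm x (matAct α x)]
  -- differentiability
  have hu2 : ContDiff ℝ ((1 : ℕ) + 1) u := by exact_mod_cast hu
  obtain ⟨hud, -, hud1⟩ := contDiff_succ_iff_deriv.mp hu2
  have hud' : Differentiable ℝ (deriv u) := hud1.differentiable (by simp)
  -- the continuous linear action
  set Lc : EuclideanSpace ℝ (Fin K) →L[ℝ] EuclideanSpace ℝ (Fin K) :=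
    (Matrix.toEuclideanLin α).toContinuousLinearMap with hLc
  have hLc_eq : ∀ x, Lc x = matAct α x := fun x => rfl
  set v : ℝ → EuclideanSpace ℝ (Fin K) := fun θ => deriv u θ + matAct α (u θ) with hv
  -- v has derivative -α v
  have hv' : ∀ θ, HasDerivAt v (-(matAct α (v θ))) θ := by
    intro θ
    have h1 : HasDerivAt (deriv u) (deriv (deriv u) θ) θ := (hud' θ).hasDerivAt
    have h2 : HasDerivAt (fun t => matAct α (u t)) (matAct α (deriv u θ)) θ := by
      exact (Lc.hasFDerivAt.comp_hasDerivAt θ (hud θ).hasDerivAt)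
    have h3 := h1.add h2
    have key : deriv (deriv u) θ + matAct α (deriv u θ) = -(matAct α (v θ)) := by
      have hz := h θ
      have hlin : matAct α (v θ)
          = matAct α (deriv u θ) + matAct α (matAct α (u θ)) := by
        simp [matAct, hv, map_add]
      rw [two_smul] at hz
      rw [hlin]
      abel_nf
      abel_nf at hz
      linear_combination (norm := module) hz
    rw [key] at h3
    exact h3
  -- ⟪v, v⟫ is constant
  have hvd : Differentiable ℝ v := fun θ => (hv' θ).differentiableAt
  set f : ℝ → ℝ := fun θ => ⟪v θ, v θ⟫ with hf
  have hf' : ∀ θ, HasDerivAt f 0 θ := by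
    intro θ
    have := (hv' θ).inner ℝ (hv' θ)
    have e1 : ⟪v θ, -(matAct α (v θ))⟫ + ⟪-(matAct α (v θ)), v θ⟫ = 0 := by
      have := skew_self (v θ)
      have hc := real_inner_comm (v θ) (matAct α (v θ))
      simp only [inner_neg_left, inner_neg_right]
      linarith
    rw [e1] at this
    exact this
  have hfc : ∀ θ, f θ = f 0 := by
    intro θ
    exact is_const_of_deriv_eq_zero (fun t => (hf' t).differentiableAt)
      (fun t => (hf' t).deriv) θ 0
  -- ⟪u, v⟫ has derivative f 0
  set g : ℝ → ℝ := fun θ => ⟪u θ, v θ⟫ with hg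
  have hg' : ∀ θ, HasDerivAt g (f 0) θ := by
    intro θ
    have hder := (hud θ).hasDerivAt.inner ℝ (hv' θ)
    have e1 : ⟪u θ, -(matAct α (v θ))⟫ + ⟪deriv u θ, v θ⟫ = f 0 := by
      have hs := skew (u θ) (v θ)
      have hc := real_inner_comm (u θ) (matAct α (v θ))
      have hc2 := real_inner_comm (matAct α (u θ)) (v θ)
      have hsplit : f θ = ⟪deriv u θ, v θ⟫ + ⟪matAct α (u θ), v θ⟫ := by
        simp only [hf, hv, inner_add_left]
      rw [← hfc θ, hsplit]
      simp only [inner_neg_right]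
      linarith [real_inner_comm (matAct α (u θ)) (v θ),
        skew (u θ) (v θ), real_inner_comm (v θ) (matAct α (u θ))]
    rw [e1] at hder
    exact hder
  -- linear growth of g
  have hlin : ∀ θ, g θ - f 0 * θ = g 0 := by
    intro θ
    have hD : ∀ t, HasDerivAt (fun s => g s - f 0 * s) 0 t := by
      intro t
      have h0 := (hg' t).sub ((hasDerivAt_id t).const_mul (f 0))
      rw [mul_one, sub_self] at h0
      exact h0
    have := is_const_of_deriv_eq_zero (fun t => (hD t).differentiableAt)
      (fun t => (hD t).deriv) θ 0
    simpa using this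
  -- periodicity of v
  have hvper : v (2 * Real.pi) = v 0 := by
    have hu0 : u (2 * Real.pi) = u 0 := by simpa using hper 0
    have hdu : deriv u (2 * Real.pi) = deriv u 0 := by
      have e : (fun x => u (x + 2 * Real.pi)) = u := funext fun x => hper x
      have := deriv_comp_add_const u (2 * Real.pi) 0
      rw [e] at this
      simpa using this.symm
    simp [hv, hu0, hdu]
  have hgper : g (2 * Real.pi) = g 0 := by
    have hu0 : u (2 * Real.pi) = u 0 := by simpa using hper 0
    simp [hg, hu0, hvper]
  have hf0 : f 0 = 0 := by
    have h1 := hlin (2 * Real.pi)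
    rw [hgper] at h1
    have : f 0 * (2 * Real.pi) = 0 := by linarith
    have hne : (2 : ℝ) * Real.pi ≠ 0 := by positivity
    exact (mul_eq_zero.mp this).resolve_right hne
  -- conclude
  intro θ
  have : ⟪v θ, v θ⟫ = 0 := by rw [show ⟪v θ, v θ⟫ = f θ from rfl, hfc θ, hf0]
  have hv0 : v θ = 0 := by
    rwa [real_inner_self_eq_norm_sq, pow_eq_zero_iff (two_ne_zero), norm_eq_zero] at this
  simpa [hv] using hv0
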